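/- Let G be a finite group of characteristic p. Then G has local characteristic p, i.e., for every nontrivial p-subgroup Q of G, the normalizer N_G(Q) has characteristic p. -/

import Mathlib

open Subgroup

noncomputable section

/-- The `p`-core `O_p(G)`: the largest normal `p`-subgroup of `G`
(defined as the join of all normal `p`-subgroups). -/
def pCore (p : ℕ) (G : Type*) [Group G] : Subgroup G :=
  ⨆ P ∈ {P : Subgroup G | P.Normal ∧ IsPGroup p ↥P}, P

/-- A group has characteristic `p` if `C_G(O_p(G)) ≤ O_p(G)`. -/
def CharacteristicP (p : ℕ) (G : Type*) [Group G] : Prop :=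
  Subgroup.centralizer ((pCore p G : Subgroup G) : Set G) ≤ pCore p G

/-- `G` has local characteristic `p` if the normalizer of every nontrivial
`p`-subgroup has characteristic `p`. -/
def LocalCharacteristicP (p : ℕ) (G : Type*) [Group G] : Prop :=
  ∀ Q : Subgroup G, Q ≠ ⊥ → IsPGroup p ↥Q → CharacteristicP p ↥(Subgroup.normalizer (Q : Set G))

/-- `G` has parabolic characteristic `p` if every `p`-local subgroup containing
a Sylow `p`-subgroup has characteristic `p`. -/
def ParabolicCharacteristicP (p : ℕ) (G : Type*) [Group G] : Prop :=
  ∀ Q : Subgroup G, Q ≠ ⊥ → IsPGroup p ↥Q →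
    (∃ S : Sylow p G, (S : Subgroup G) ≤ Subgroup.normalizer (Q : Set G)) →
      CharacteristicP p ↥(Subgroup.normalizer (Q : Set G))

/-- A `p`-subgroup `R` is `p`-radical if `R = O_p(N_G(R))`. -/
def IsRadicalPSubgroup (p : ℕ) {G : Type*} [Group G] (R : Subgroup G) : Prop :=
  IsPGroup p ↥R ∧ (pCore p ↥(Subgroup.normalizer (R : Set G))).map
      (Subgroup.normalizer (R : Set G)).subtype = R

/-- A `p`-subgroup `R` is `p`-centric if `Z(R) = R ⊓ C_G(R)` is a Sylow `p`-subgroup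
of `C_G(R)` (equivalently, in a finite group, a maximal `p`-subgroup of `C_G(R)`). -/
def IsPCentric (p : ℕ) {G : Type*} [Group G] (R : Subgroup G) : Prop :=
  IsPGroup p ↥R ∧
    IsPGroup p ↥(R ⊓ Subgroup.centralizer (R : Set G)) ∧
    ∀ Q : Subgroup G, Q ≤ Subgroup.centralizer (R : Set G) → IsPGroup p ↥Q →
      R ⊓ Subgroup.centralizer (R : Set G) ≤ Q → Q = R ⊓ Subgroup.centralizer (R : Set G)

/-- An element of order `p` is `p`-central if it lies in the center of some
Sylow `p`-subgroup of `G`. -/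
def IsPCentralElement (p : ℕ) {G : Type*} [Group G] (x : G) : Prop :=
  orderOf x = p ∧ ∃ S : Sylow p G, x ∈ (S : Subgroup G) ∧ ∀ y ∈ (S : Subgroup G), x * y = y * x

/-- A `p`-subgroup is purely noncentral if it contains no `p`-central element of `G`. -/
def PurelyNoncentral (p : ℕ) {G : Type*} [Group G] (P : Subgroup G) : Prop :=
  ∀ x ∈ P, ¬ IsPCentralElement p x

/-- Conjugation action of `g` on the group algebra. -/
def conjA {k : Type*} [Semiring k] {G : Type*} [Group G] (g : G) (x : MonoidAlgebra k G) :
    MonoidAlgebra k G :=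
  MonoidAlgebra.single g 1 * x * MonoidAlgebra.single g⁻¹ 1

/-- The relative trace map `Tr_H^G` on the group algebra (summing conjugates over
a set of coset representatives of `H`). -/
def relTr {k : Type*} [Semiring k] {G : Type*} [Group G] (H : Subgroup G)
    (x : MonoidAlgebra k G) : MonoidAlgebra k G :=
  ∑ᶠ q : G ⧸ H, conjA (Quotient.out q) x

/-- A block (idempotent) of `kG`: a primitive central idempotent. -/
def IsBlockOf (k : Type*) [Semiring k] (G : Type*) [Group G] (e : MonoidAlgebra k G) : Prop :=
  e ≠ 0 ∧ e * e = e ∧ (∀ x, e * x = x * e) ∧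
    ∀ f g : MonoidAlgebra k G, (∀ x, f * x = x * f) → (∀ x, g * x = x * g) →
      f * f = f → g * g = g → f * g = 0 → f + g = e → f = 0 ∨ g = 0

/-- `D` is a defect group of the block `e`: `D` is a `p`-subgroup, minimal with the
property that `e` lies in the image of the relative trace map `Tr_D^G` on `D`-fixed points. -/
def IsDefectGroupOf (p : ℕ) (k : Type*) [Semiring k] (G : Type*) [Group G]
    (D : Subgroup G) (e : MonoidAlgebra k G) : Prop :=
  IsPGroup p ↥D ∧
    (∃ x, (∀ h ∈ D, conjA h x = x) ∧ relTr D x = e) ∧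
    ∀ Q : Subgroup G, Q ≤ D → (∃ x, (∀ h ∈ Q, conjA h x = x) ∧ relTr Q x = e) → Q = D

/-- The augmentation map on the group algebra; a block is principal iff its
augmentation is nonzero. -/
def augm {k : Type*} [Semiring k] {G : Type*} [Group G] (x : MonoidAlgebra k G) : k :=
  Finsupp.sum x.coeff fun _ a => a

/-- `E` is subnormal in `G`. -/
def SubnormalIn {G : Type*} [Group G] (E : Subgroup G) : Prop :=
  ∃ (n : ℕ) (f : ℕ → Subgroup G), f 0 = E ∧ f n = ⊤ ∧
    ∀ i < n, f i ≤ f (i + 1) ∧ ((f i).subgroupOf (f (i + 1))).Normal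

/-- A quasisimple group: perfect with simple central quotient. -/
def IsQuasisimpleGroup (H : Type*) [Group H] : Prop :=
  commutator H = ⊤ ∧ IsSimpleGroup (H ⧸ Subgroup.center H)

/-- A component of `G`: a subnormal quasisimple subgroup. -/
def IsComponentOf {G : Type*} [Group G] (E : Subgroup G) : Prop :=
  SubnormalIn E ∧ IsQuasisimpleGroup ↥E

/-- The Fitting subgroup: the join of all nilpotent normal subgroups. -/
def fittingSubgroup (G : Type*) [Group G] : Subgroup G :=
  ⨆ P ∈ {P : Subgroup G | P.Normal ∧ Group.IsNilpotent ↥P}, P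

/-- The generalized Fitting subgroup `F*(G) = F(G)E(G)`. -/
def generalizedFitting (G : Type*) [Group G] : Subgroup G :=
  fittingSubgroup G ⊔ ⨆ E ∈ {E : Subgroup G | IsComponentOf E}, E

section pCoreFacts

variable {p : ℕ} {G : Type*} [Group G]

lemma pCore_spec (p : ℕ) (G : Type*) [Group G] [Finite G] :
    (pCore p G).Normal ∧ IsPGroup p ↥(pCore p G) := by
  haveI : Finite (Subgroup G) :=
    Finite.of_injective (fun H : Subgroup G => (H : Set G)) SetLike.coe_injective
  have hfin : {P : Subgroup G | P.Normal ∧ IsPGroup p ↥P}.Finite := Set.toFinite _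
  have heq : pCore p G = hfin.toFinset.sup id := by
    rw [pCore, ← sSup_eq_iSup, Finset.sup_id_eq_sSup, hfin.coe_toFinset]
  rw [heq]
  refine Finset.sup_induction (p := fun P : Subgroup G => P.Normal ∧ IsPGroup p ↥P)
    ⟨inferInstance, IsPGroup.of_bot⟩ ?_ ?_
  · rintro a ⟨ha1, ha2⟩ b ⟨hb1, hb2⟩
    haveI := ha1; haveI := hb1
    exact ⟨Subgroup.sup_normal a b, ha2.to_sup_of_normal_right hb2⟩
  · intro P hP
    exact (hfin.mem_toFinset.mp hP)

lemma pCore_normal (p : ℕ) (G : Type*) [Group G] [Finite G] : (pCore p G).Normal :=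
  (pCore_spec p G).1

lemma pCore_isPGroup (p : ℕ) (G : Type*) [Group G] [Finite G] : IsPGroup p ↥(pCore p G) :=
  (pCore_spec p G).2

lemma le_pCore {P : Subgroup G} (h1 : P.Normal) (h2 : IsPGroup p ↥P) : P ≤ pCore p G := by
  have : P ∈ {P : Subgroup G | P.Normal ∧ IsPGroup p ↥P} := ⟨h1, h2⟩
  exact le_biSup (f := fun P : Subgroup G => P) this

end pCoreFacts

open Subgroup

universe u

section PQL

variable {p r : ℕ}

lemma pql_endgame {V : Type u} [Group V] (hp : p.Prime) (hr : r.Prime) (hrp : r ≠ p)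
    (x : MulAut V) (hx : x ^ r = 1) {c v : V} (hcfix : x c = c) (hcv : x v = c * v)
    (hc : ∃ k, c ^ p ^ k = 1) : x v = v := by
  have hck : ∀ k : ℕ, (x ^ k) c = c := by
    intro k
    induction k with
    | zero => simp
    | succ k ih => rw [pow_succ, MulAut.mul_apply, hcfix, ih]
  have hpow : ∀ k : ℕ, (x ^ k) v = c ^ k * v := by
    intro k
    induction k with
    | zero => simp
    | succ k ih =>
      rw [pow_succ, MulAut.mul_apply, hcv, map_mul, hck, ih, pow_succ']
      group
  have h1 : c ^ r * v = 1 * v := by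
    have := hpow r
    rw [hx] at this
    simp only [MulAut.one_apply] at this
    rw [← this, one_mul]
  have hcr : c ^ r = 1 := mul_right_cancel h1
  obtain ⟨k, hk⟩ := hc
  have hd1 : orderOf c ∣ r := orderOf_dvd_of_pow_eq_one hcr
  have hd2 : orderOf c ∣ p ^ k := orderOf_dvd_of_pow_eq_one hk
  have hcop : Nat.Coprime r (p ^ k) :=
    ((Nat.coprime_primes hr hp).mpr hrp).pow_right k
  have hone : orderOf c ∣ 1 := hcop ▸ Nat.dvd_gcd hd1 hd2
  have hc1 : c = 1 := orderOf_eq_one_iff.mp (Nat.dvd_one.mp hone)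
  rw [hcv, hc1, one_mul]

set_option maxHeartbeats 1000000 in
lemma pql (hp : p.Prime) (hr : r.Prime) (hrp : r ≠ p) :
    ∀ (n : ℕ) (V : Type u) [Group V] [Finite V], Nat.card V ≤ n →
    IsPGroup p V → ∀ B : Subgroup (MulAut V), IsPGroup p B →
    ∀ x : MulAut V, x ^ r = 1 → (∀ b ∈ B, Commute x b) →
    (∀ v : V, (∀ b ∈ B, b v = v) → x v = v) →
    ∀ v : V, x v = v := by
  intro n
  induction n with
  | zero =>
    intro V _ _ hcard
    exact absurd hcard (by simpa using Nat.card_pos.ne')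
  | succ n ih =>
    intro V _ _ hcard hV B hB x hx hcomm hfix v
    by_cases htriv : Subsingleton V
    · exact Subsingleton.elim _ _
    haveI : Nontrivial V := not_subsingleton_iff_nontrivial.mp htriv
    classical
    haveI : Fact p.Prime := ⟨hp⟩
    -- the subgroup W = C_{Z(V)}(B)
    set W : Subgroup V :=
      { carrier := {w | w ∈ Subgroup.center V ∧ ∀ b ∈ B, b w = w}
        one_mem' := ⟨Subgroup.one_mem _, fun b _ => map_one b⟩
        mul_mem' := by
          rintro a c ⟨ha1, ha2⟩ ⟨hb1, hb2⟩
          exact ⟨Subgroup.mul_mem _ ha1 hb1, fun g hg => by rw [map_mul, ha2 g hg, hb2 g hg]⟩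
        inv_mem' := by
          rintro a ⟨ha1, ha2⟩
          exact ⟨Subgroup.inv_mem _ ha1, fun g hg => by rw [map_inv, ha2 g hg]⟩ } with hWdef
    have hWcen : ∀ {w : V}, w ∈ W → ∀ g : V, g * w = w * g := by
      intro w hw g
      exact (Subgroup.mem_center_iff.mp hw.1 g)
    have hWx : ∀ w ∈ W, x w = w := fun w hw => hfix w hw.2
    have hxb : ∀ b ∈ B, ∀ w : V, x (b w) = b (x w) := by
      intro b hb w
      have hcb : x * b = b * x := hcomm b hb
      have h2 : (x * b) w = (b * x) w := by rw [hcb]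
      simpa only [MulAut.mul_apply] using h2
    have hWswap2 : ∀ a c : V, c * a⁻¹ ∈ W → a⁻¹ * c ∈ W := by
      intro a c h
      have heq : a⁻¹ * c = c * a⁻¹ := by
        calc a⁻¹ * c = a⁻¹ * (c * a⁻¹) * a := by group
          _ = (c * a⁻¹) * a⁻¹ * a := by rw [hWcen h a⁻¹]
          _ = c * a⁻¹ := by group
      rw [heq]; exact h
    have hWswap : ∀ a c : V, a⁻¹ * c ∈ W → c * a⁻¹ ∈ W := by
      intro a c h
      have heq : c * a⁻¹ = a⁻¹ * c := by
        calc c * a⁻¹ = a * (a⁻¹ * c) * a⁻¹ := by group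
          _ = (a⁻¹ * c) * a * a⁻¹ := by rw [hWcen h a]
          _ = a⁻¹ * c := by group
      rw [heq]; exact h
    -- the subgroup U
    set U : Subgroup V :=
      { carrier := {u | ∀ b ∈ B, b u * u⁻¹ ∈ W}
        one_mem' := by intro b hb; simpa using W.one_mem
        mul_mem' := by
          intro a c ha hc b hb
          have h1 : b a * a⁻¹ ∈ W := ha b hb
          have h2 : b c * c⁻¹ ∈ W := hc b hb
          have heq : b (a * c) * (a * c)⁻¹ = (b c * c⁻¹) * (b a * a⁻¹) := by
            rw [map_mul, mul_inv_rev]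
            calc b a * b c * (c⁻¹ * a⁻¹) = b a * (b c * c⁻¹) * a⁻¹ := by group
              _ = (b c * c⁻¹) * b a * a⁻¹ := by rw [← hWcen h2 (b a), mul_assoc]
              _ = (b c * c⁻¹) * (b a * a⁻¹) := by group
          rw [heq]
          exact W.mul_mem h2 h1
        inv_mem' := by
          intro a ha b hb
          have h1 : b a * a⁻¹ ∈ W := ha b hb
          have h2 : a⁻¹ * b a ∈ W := hWswap2 a (b a) h1
          have heq : b a⁻¹ * (a⁻¹)⁻¹ = (a⁻¹ * b a)⁻¹ := by
            rw [map_inv, inv_inv]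
            group
          rw [heq]
          exact W.inv_mem h2 } with hUdef
    by_cases hU : U = ⊤
    · -- Case A : [V,x] ≤ C_V(B)
      have hvU : v ∈ U := hU ▸ Subgroup.mem_top v
      have hkey : ∀ b ∈ B, b (x v * v⁻¹) = x v * v⁻¹ := by
        intro b hb
        have hw : b v * v⁻¹ ∈ W := hvU b hb
        have hxw : x (b v * v⁻¹) = b v * v⁻¹ := hWx _ hw
        have h1 : b (x v) = (b v * v⁻¹) * x v := by
          calc b (x v) = x (b v) := (hxb b hb v).symm
            _ = x ((b v * v⁻¹) * v) := by rw [inv_mul_cancel_right]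
            _ = (b v * v⁻¹) * x v := by rw [map_mul, hxw]
        rw [map_mul, map_inv, h1]
        have h2 : (b v)⁻¹ = v⁻¹ * (b v * v⁻¹)⁻¹ := by group
        rw [h2]
        calc (b v * v⁻¹) * x v * (v⁻¹ * (b v * v⁻¹)⁻¹)
            = (b v * v⁻¹) * (x v * v⁻¹) * (b v * v⁻¹)⁻¹ := by group
          _ = ((x v * v⁻¹) * (b v * v⁻¹)) * (b v * v⁻¹)⁻¹ := by rw [← hWcen hw (x v * v⁻¹)]
          _ = x v * v⁻¹ := by group
      have hcfix : x (x v * v⁻¹) = x v * v⁻¹ := hfix _ hkey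
      exact pql_endgame hp hr hrp x hx hcfix (by group) (hV (x v * v⁻¹))
    · -- Case B
      -- W is nontrivial
      obtain ⟨w₀, hw₀W, hw₀ne⟩ : ∃ w₀ : V, w₀ ∈ W ∧ w₀ ≠ 1 := by
        have hpres : ∀ (f : MulAut V) (z : V), z ∈ Subgroup.center V → f z ∈ Subgroup.center V := by
          intro f z hz
          rw [Subgroup.mem_center_iff] at hz ⊢
          intro g
          calc g * f z = f (f.symm g) * f z := by rw [f.apply_symm_apply]
            _ = f (f.symm g * z) := by rw [map_mul]
            _ = f (z * f.symm g) := by rw [hz]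
            _ = f z * g := by rw [map_mul, f.apply_symm_apply]
        letI act : MulAction ↥B ↥(Subgroup.center V) :=
          { smul := fun b z => ⟨(b : MulAut V) z, hpres b z z.2⟩
            one_smul := fun z => Subtype.ext (by
              show ((1 : ↥B) : MulAut V) (z : V) = z
              simp)
            mul_smul := fun a b z => Subtype.ext (by
              show ((a * b : ↥B) : MulAut V) (z : V) = (a : MulAut V) ((b : MulAut V) z)
              simp [MulAut.mul_apply]) }
        haveI : Nontrivial ↥(Subgroup.center V) := hV.center_nontrivial
        have hZp : IsPGroup p ↥(Subgroup.center V) := hV.to_subgroup _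
        have hdvd : p ∣ Nat.card ↥(Subgroup.center V) := by
          obtain ⟨k, hk⟩ := IsPGroup.iff_card.mp hZp
          rw [hk]
          refine dvd_pow_self p ?_
          rintro rfl
          rw [pow_zero] at hk
          exact (Finite.one_lt_card).ne' hk
        have h1fix : (1 : ↥(Subgroup.center V)) ∈
            MulAction.fixedPoints ↥B ↥(Subgroup.center V) := by
          intro b
          refine Subtype.ext ?_
          show (b : MulAut V) ((1 : ↥(Subgroup.center V)) : V) = 1
          simp
        obtain ⟨z, hzfix, hzne⟩ :=
          hB.exists_fixed_point_of_prime_dvd_card_of_fixed_point (↥(Subgroup.center V)) hdvd h1fix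
        refine ⟨(z : V), ⟨z.2, ?_⟩, ?_⟩
        · intro b hb
          exact congrArg Subtype.val (hzfix ⟨b, hb⟩)
        · intro h
          exact hzne (Subtype.ext (by simp [h]))
      -- U is closed under x, x.symm and B
      have hxU : ∀ u ∈ U, x u ∈ U := by
        intro u hu b hb
        have hw : b u * u⁻¹ ∈ W := hu b hb
        have h1 : b (x u) = (b u * u⁻¹) * x u := by
          calc b (x u) = x (b u) := (hxb b hb u).symm
            _ = x ((b u * u⁻¹) * u) := by rw [inv_mul_cancel_right]
            _ = (b u * u⁻¹) * x u := by rw [map_mul, hWx _ hw]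
        rw [h1]
        simpa using hw
      have hxkU : ∀ (k : ℕ), ∀ u ∈ U, (x ^ k) u ∈ U := by
        intro k
        induction k with
        | zero => intro u hu; simpa using hu
        | succ k ihk =>
          intro u hu
          rw [pow_succ, MulAut.mul_apply]
          exact ihk _ (hxU u hu)
      have hxsymmU : ∀ u ∈ U, x.symm u ∈ U := by
        have hprod : x * x ^ (r - 1) = 1 := by
          rw [← pow_succ', Nat.sub_add_cancel hr.one_lt.le]
          exact hx
        have hinv : x⁻¹ = x ^ (r - 1) := inv_eq_of_mul_eq_one_right hprod
        intro u hu
        have heq : x.symm u = (x ^ (r - 1)) u := by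
          rw [← hinv]
          rfl
        rw [heq]
        exact hxkU _ u hu
      have hWleU : ∀ w ∈ W, w ∈ U := by
        intro w hw' b' hb'
        have : (b' : MulAut V) w * w⁻¹ = 1 := by rw [hw'.2 b' hb', mul_inv_cancel]
        rw [this]
        exact W.one_mem
      have hbU : ∀ b ∈ B, ∀ u ∈ U, b u ∈ U := by
        intro b hb u hu
        have hw : b u * u⁻¹ ∈ W := hu b hb
        have heq : b u = (b u * u⁻¹) * u := by group
        rw [heq]
        exact U.mul_mem (hWleU _ hw) hu
      -- restriction to U
      set xU : MulAut ↥U :=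
        { toFun := fun u => ⟨x (u : V), hxU _ u.2⟩
          invFun := fun u => ⟨x.symm (u : V), hxsymmU _ u.2⟩
          left_inv := fun u => Subtype.ext (x.symm_apply_apply (u : V))
          right_inv := fun u => Subtype.ext (x.apply_symm_apply (u : V))
          map_mul' := fun a b => Subtype.ext (map_mul x (a : V) (b : V)) } with hxUdef
    
      set ρ : ↥B →* MulAut ↥U :=
        { toFun := fun b =>
            { toFun := fun u => ⟨(b : MulAut V) (u : V), hbU b b.2 _ u.2⟩
              invFun := fun u => ⟨((b⁻¹ : ↥B) : MulAut V) (u : V), hbU _ (b⁻¹).2 _ u.2⟩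
              left_inv := fun u => Subtype.ext (by
                show ((b⁻¹ : ↥B) : MulAut V) ((b : MulAut V) (u : V)) = (u : V)
                rw [InvMemClass.coe_inv, ← MulAut.mul_apply, inv_mul_cancel, MulAut.one_apply])
              right_inv := fun u => Subtype.ext (by
                show (b : MulAut V) (((b⁻¹ : ↥B) : MulAut V) (u : V)) = (u : V)
                rw [InvMemClass.coe_inv, ← MulAut.mul_apply, mul_inv_cancel, MulAut.one_apply])
              map_mul' := fun a c => Subtype.ext (map_mul (b : MulAut V) (a : V) (c : V)) }
          map_one' := by
            refine MulEquiv.ext fun u => Subtype.ext ?_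
            show ((1 : ↥B) : MulAut V) (u : V) = u
            simp
          map_mul' := fun a b => by
            refine MulEquiv.ext fun u => Subtype.ext ?_
            show ((a * b : ↥B) : MulAut V) (u : V) = (a : MulAut V) ((b : MulAut V) u)
            simp [MulAut.mul_apply] } with hρdef
      have hρapply : ∀ (b : ↥B) (u : ↥U), ((ρ b u : ↥U) : V) = (b : MulAut V) (u : V) :=
        fun b u => rfl
      have hxUapply : ∀ u : ↥U, ((xU u : ↥U) : V) = x (u : V) := fun u => rfl
      have hcardU : Nat.card ↥U ≤ n := by
        have hle : Nat.card ↥U ≤ Nat.card V := Subgroup.card_le_card_group U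
        have hne : Nat.card ↥U ≠ Nat.card V := fun h => hU (Subgroup.eq_top_of_card_eq U h)
        omega
      have hxUpow : ∀ (k : ℕ) (u : ↥U), ((xU ^ k) u : V) = (x ^ k) (u : V) := by
        intro k
        induction k with
        | zero => intro u; simp
        | succ k ihk =>
          intro u
          rw [pow_succ, MulAut.mul_apply, pow_succ, MulAut.mul_apply, ihk (xU u), hxUapply]
      have hUfix : ∀ u ∈ U, x u = u := by
        intro u hu
        have hres := ih ↥U hcardU (hV.to_subgroup U) ρ.range
          (hB.of_surjective ρ.rangeRestrict ρ.rangeRestrict_surjective)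
          xU
          (by
            refine MulEquiv.ext fun w => Subtype.ext ?_
            rw [show ((xU ^ r) w : V) = (x ^ r) (w : V) from hxUpow r w, hx]
            rfl)
          (by
            rintro bb ⟨b, rfl⟩
            show xU * ρ b = ρ b * xU
            refine MulEquiv.ext fun w => Subtype.ext ?_
            rw [MulAut.mul_apply, MulAut.mul_apply]
            show x ((b : MulAut V) (w : V)) = (b : MulAut V) (x (w : V))
            exact hxb b b.2 w)
          (by
            intro w hwfix
            refine Subtype.ext ?_
            show x (w : V) = (w : V)
            refine hfix (w : V) ?_
            intro b hb
            have := hwfix (ρ ⟨b, hb⟩) ⟨⟨b, hb⟩, rfl⟩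
            exact congrArg Subtype.val this)
          ⟨u, hu⟩
        exact congrArg Subtype.val hres
      -- quotient by W
      haveI hWnormal : W.Normal := by
        constructor
        intro w hw g
        have heq : g * w * g⁻¹ = w := by rw [hWcen hw g]; group
        rw [heq]
        exact hw
      have hmap : ∀ (f : MulAut V), (∀ w ∈ W, f w = w) →
          Subgroup.map (f : V →* V) W = W := by
        intro f hf
        apply le_antisymm
        · rintro _ ⟨w, hw, rfl⟩
          show f w ∈ W
          rw [hf w hw]
          exact hw
        · intro w hw
          exact ⟨w, hw, hf w hw⟩
      set xbar : MulAut (V ⧸ W) := QuotientGroup.congr W W x (hmap x hWx) with hxbardef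
      have hxbar_mk : ∀ vv : V, xbar (QuotientGroup.mk vv) = (QuotientGroup.mk (x vv) : V ⧸ W) :=
        fun vv => QuotientGroup.congr_mk W W x (hmap x hWx) vv
      set ψ : ↥B →* MulAut (V ⧸ W) :=
        { toFun := fun b => QuotientGroup.congr W W (b : MulAut V)
            (hmap _ (fun w hw => hw.2 b b.2))
          map_one' := by
            refine MulEquiv.ext fun q => ?_
            obtain ⟨vv, rfl⟩ := QuotientGroup.mk_surjective q
            rw [QuotientGroup.congr_mk]
            show (((((1 : ↥B) : MulAut V)) vv : V) : V ⧸ W) = (1 : MulAut (V ⧸ W)) _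
            simp
          map_mul' := fun a b => by
            refine MulEquiv.ext fun q => ?_
            obtain ⟨vv, rfl⟩ := QuotientGroup.mk_surjective q
            rw [MulAut.mul_apply, QuotientGroup.congr_mk, QuotientGroup.congr_mk,
              QuotientGroup.congr_mk]
            show ((((a * b : ↥B) : MulAut V) vv : V) : V ⧸ W) = _
            simp [MulAut.mul_apply] } with hψdef
      have hψ_mk : ∀ (b : ↥B) (vv : V),
          ψ b (QuotientGroup.mk vv) = (QuotientGroup.mk ((b : MulAut V) vv) : V ⧸ W) :=
        fun b vv => QuotientGroup.congr_mk W W (b : MulAut V)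
          (hmap _ (fun w hw => hw.2 b b.2)) vv
      have hxbarpow : ∀ (k : ℕ) (vv : V), (xbar ^ k) (QuotientGroup.mk vv) = (QuotientGroup.mk ((x ^ k) vv) : V ⧸ W) := by
        intro k
        induction k with
        | zero => intro vv; simp
        | succ k ihk =>
          intro vv
          rw [pow_succ, MulAut.mul_apply, hxbar_mk, ihk, pow_succ, MulAut.mul_apply]
      have hcardq : Nat.card (V ⧸ W) ≤ n := by
        have h1 : Nat.card V = Nat.card (V ⧸ W) * Nat.card ↥W :=
          Subgroup.card_eq_card_quotient_mul_card_subgroup W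
        haveI : Nontrivial ↥W := ⟨⟨⟨w₀, hw₀W⟩, 1, fun h => hw₀ne (congrArg Subtype.val h)⟩⟩
        have h2 : 2 ≤ Nat.card ↥W := Finite.one_lt_card
        have h3 : Nat.card (V ⧸ W) * 2 ≤ Nat.card V := by
          rw [h1]
          exact Nat.mul_le_mul_left _ h2
        have h4 : 0 < Nat.card (V ⧸ W) := Nat.card_pos
        omega
      have hquot := ih (V ⧸ W) hcardq (hV.to_quotient W) ψ.range
        (hB.of_surjective ψ.rangeRestrict ψ.rangeRestrict_surjective)
        xbar
        (by
          refine MulEquiv.ext fun q => ?_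
          obtain ⟨vv, rfl⟩ := QuotientGroup.mk_surjective q
          rw [hxbarpow r vv, hx]
          rfl)
        (by
          rintro bb ⟨b, rfl⟩
          show xbar * ψ b = ψ b * xbar
          refine MulEquiv.ext fun q => ?_
          obtain ⟨vv, rfl⟩ := QuotientGroup.mk_surjective q
          rw [MulAut.mul_apply, MulAut.mul_apply, hψ_mk, hxbar_mk ((b : MulAut V) vv),
            hxbar_mk vv, hψ_mk, hxb b b.2 vv])
        (by
          intro q hqfix
          obtain ⟨vv, rfl⟩ := QuotientGroup.mk_surjective q
          have hvvU : vv ∈ U := by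
            intro b hb
            have h5 := hqfix (ψ ⟨b, hb⟩) ⟨⟨b, hb⟩, rfl⟩
            rw [hψ_mk] at h5
            have h6 : (b vv)⁻¹ * vv ∈ W := QuotientGroup.eq.mp h5
            have h7 : vv⁻¹ * (b vv) ∈ W := by
              have := W.inv_mem h6
              simpa using this
            exact hWswap vv (b vv) h7
          rw [hxbar_mk, hUfix vv hvvU])
        (QuotientGroup.mk v)
      rw [hxbar_mk] at hquot
      have hc : x v * v⁻¹ ∈ W := by
        have h6 : (x v)⁻¹ * v ∈ W := QuotientGroup.eq.mp hquot
        have h7 : v⁻¹ * (x v) ∈ W := by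
          have := W.inv_mem h6
          simpa using this
        exact hWswap v (x v) h7
      exact pql_endgame hp hr hrp x hx (hWx _ hc) (by group) (hV (x v * v⁻¹))

end PQL
section Main

variable {G : Type*} [Group G] [Finite G]

lemma stmt1_aux (p : ℕ) [Fact p.Prime]
    (hG : Subgroup.centralizer ((pCore p G : Subgroup G) : Set G) ≤ pCore p G)
    (Q : Subgroup G) (hQ : IsPGroup p ↥Q) :
    Subgroup.centralizer ((pCore p ↥(Subgroup.normalizer (Q : Set G)) : Subgroup ↥(Subgroup.normalizer (Q : Set G))) : Set ↥(Subgroup.normalizer (Q : Set G)))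
      ≤ pCore p ↥(Subgroup.normalizer (Q : Set G)) := by
  classical
  set H := Subgroup.normalizer (Q : Set G) with hHdef
  set R : Subgroup ↥H := pCore p ↥H with hRdef
  set C : Subgroup ↥H := Subgroup.centralizer (R : Set ↥H) with hCdef
  haveI hRnormal : R.Normal := pCore_normal p ↥H
  haveI hCnormal : C.Normal := by
    constructor
    intro c hc g
    rw [Subgroup.mem_centralizer_iff]
    intro s hs
    have hs' : g⁻¹ * s * g ∈ R := by
      have := hRnormal.conj_mem s hs g⁻¹
      simpa using this
    have h1 : (g⁻¹ * s * g) * c = c * (g⁻¹ * s * g) :=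
      (Subgroup.mem_centralizer_iff.mp hc) _ hs'
    calc s * (g * c * g⁻¹) = g * ((g⁻¹ * s * g) * c) * g⁻¹ := by group
      _ = g * (c * (g⁻¹ * s * g)) * g⁻¹ := by rw [h1]
      _ = (g * c * g⁻¹) * s := by group
  have key : ∀ s : ℕ, s.Prime → s ∣ Nat.card ↥C → s = p := by
    intro s hs hdvd
    by_cases hsp : s = p
    · exact hsp
    exfalso
    haveI : Fact s.Prime := ⟨hs⟩
    obtain ⟨ξ, hξord⟩ := exists_prime_orderOf_dvd_card' s hdvd
    set x₀ : G := ((ξ : ↥H) : G) with hx₀def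
    have hx₀ord : orderOf x₀ = s := by
      rw [show x₀ = H.subtype (C.subtype ξ) from rfl,
        orderOf_injective H.subtype Subtype.coe_injective,
        orderOf_injective C.subtype Subtype.coe_injective, hξord]
    have hcent : ∀ η : ↥H, η ∈ R → (η : G) * x₀ = x₀ * (η : G) := by
      intro η hη
      have h1 : η * (ξ : ↥H) = (ξ : ↥H) * η := (Subgroup.mem_centralizer_iff.mp ξ.2) η hη
      exact congrArg Subtype.val h1
    have hQle : Q.subgroupOf H ≤ R :=
      le_pCore Subgroup.normal_in_normalizer hQ.comap_subtype
    have hxQ : ∀ q ∈ Q, q * x₀ = x₀ * q := by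
      intro q hq
      have hqH : q ∈ H := Subgroup.le_normalizer hq
      exact hcent ⟨q, hqH⟩ (hQle (Subgroup.mem_subgroupOf.mpr hq))
    set V : Subgroup G := pCore p G with hVdef
    haveI hVnormal : V.Normal := pCore_normal p G
    have hVp : IsPGroup p ↥V := pCore_isPGroup p G
    have hVle : V.subgroupOf H ≤ R :=
      le_pCore (hVnormal.subgroupOf H) hVp.comap_subtype
    set x : MulAut ↥V := MulAut.conjNormal x₀ with hxdef
    set B : Subgroup (MulAut ↥V) := Q.map (MulAut.conjNormal (H := V)) with hBdef
    have hB : IsPGroup p ↥B := hQ.map _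
    have hxr : x ^ s = 1 := by
      rw [hxdef, ← map_pow, ← hx₀ord, pow_orderOf_eq_one, map_one]
    have hcommB : ∀ b ∈ B, Commute x b := by
      rintro b ⟨q, hq, rfl⟩
      show x * MulAut.conjNormal q = MulAut.conjNormal q * x
      rw [hxdef, ← map_mul, ← map_mul, ← hxQ q hq]
    have hfixB : ∀ w : ↥V, (∀ b ∈ B, b w = w) → x w = w := by
      intro w hw
      have hq : ∀ q ∈ Q, q * (w : G) * q⁻¹ = (w : G) := by
        intro q hq'
        have h2 := congrArg Subtype.val (hw (MulAut.conjNormal q) ⟨q, hq', rfl⟩)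
        rwa [MulAut.conjNormal_apply] at h2
      have hqcomm : ∀ q ∈ Q, (w : G) * q = q * (w : G) := by
        intro q hq'
        have h3 := hq q hq'
        calc (w : G) * q = (q * (w : G) * q⁻¹) * q := by rw [h3]
          _ = q * (w : G) := by group
      have hwH : (w : G) ∈ H := by
        rw [hHdef, Subgroup.mem_normalizer_iff]
        intro h
        constructor
        · intro hh
          have heq : (w : G) * h * (w : G)⁻¹ = h := by
            rw [hqcomm h hh]; group
          rw [heq]; exact hh
        · intro hh
          have h5 : ((w : G) * h * (w : G)⁻¹) * (w : G) = (w : G) * h := by group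
          have h6 : (w : G) * ((w : G) * h * (w : G)⁻¹) = (w : G) * h := by
            rw [hqcomm _ hh, h5]
          have h7 : (w : G) * h * (w : G)⁻¹ = h := mul_left_cancel h6
          exact h7 ▸ hh
      have hwR : (⟨(w : G), hwH⟩ : ↥H) ∈ R := hVle (Subgroup.mem_subgroupOf.mpr w.2)
      have h8 : (w : G) * x₀ = x₀ * (w : G) := hcent _ hwR
      refine Subtype.ext ?_
      show ((MulAut.conjNormal x₀) w : G) = (w : G)
      rw [MulAut.conjNormal_apply]
      rw [← h8]
      group
    have hfixall := pql (Fact.out : p.Prime) hs hsp (Nat.card ↥V) ↥V le_rfl hVp B hB x hxr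
      hcommB hfixB
    have hx₀cen : x₀ ∈ Subgroup.centralizer (V : Set G) := by
      rw [Subgroup.mem_centralizer_iff]
      intro m hm
      have h9 : x₀ * m * x₀⁻¹ = m := congrArg Subtype.val (hfixall ⟨m, hm⟩)
      have h10 : x₀ * m = m * x₀ := by
        conv_rhs => rw [← h9]
        group
      exact h10.symm
    have hx₀V : x₀ ∈ V := hG hx₀cen
    obtain ⟨k, hk⟩ := hVp ⟨x₀, hx₀V⟩
    have hk' : x₀ ^ p ^ k = 1 := by
      have := congrArg Subtype.val hk
      simpa using this
    have hd1 : s ∣ p ^ k := hx₀ord ▸ orderOf_dvd_of_pow_eq_one hk'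
    have hd2 : s ∣ p := hs.dvd_of_dvd_pow hd1
    exact hsp ((Nat.prime_dvd_prime_iff_eq hs Fact.out).mp hd2)
  have hCp : IsPGroup p ↥C := by
    have hcard0 : Nat.card ↥C ≠ 0 := Nat.card_pos.ne'
    have hcardeq := Nat.eq_prime_pow_of_unique_prime_dvd hcard0
      (fun {d} hd hdd => key d hd hdd)
    exact IsPGroup.of_card hcardeq
  exact le_pCore hCnormal hCp

end Main


theorem stmt1 {G : Type*} [Group G] [Finite G] (p : ℕ) [Fact p.Prime]
    (hG : CharacteristicP p G) : LocalCharacteristicP p G := by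
  intro Q hQbot hQ
  exact stmt1_aux p hG Q hQ
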